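/- Let λ > 0, μ > 0 and x, y ∈ ℝ, and set z = √(λ+μ)·(y−x). Then N(y)^{−1}·M(y)·M(x)^{−1} − N(y)^{−1} equals sinh(z/2) times the 2×2 matrix with entries: (1,1) entry e^{−√λ y}[√((λ+μ)/λ)·cosh(z/2) + sinh(z/2)]; (1,2) entry (e^{−√λ y}/√λ)[√(λ/(λ+μ))·cosh(z/2) + sinh(z/2)]; (2,1) entry e^{√λ y}[−√((λ+μ)/λ)·cosh(z/2) + sinh(z/2)]; (2,2) entry (e^{√λ y}/√λ)[√(λ/(λ+μ))·cosh(z/2) − sinh(z/2)]. -/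

import Mathlib

open Matrix Real

/-- The fundamental matrix `N(x)` associated with parameter `λ`:
`N(x) = ((e^{√λ x}, e^{−√λ x}), (√λ e^{√λ x}, −√λ e^{−√λ x}))`.
The matrix `M(x)` of the paper is `Nmat (λ+μ) x`. -/
noncomputable def Nmat (lam x : ℝ) : Matrix (Fin 2) (Fin 2) ℝ :=
  !![Real.exp (Real.sqrt lam * x), Real.exp (-(Real.sqrt lam * x));
     Real.sqrt lam * Real.exp (Real.sqrt lam * x),
       -(Real.sqrt lam * Real.exp (-(Real.sqrt lam * x)))]

lemma Nmat_det (lam x : ℝ) : (Nmat lam x).det = -(2 * Real.sqrt lam) := by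
  have h : Real.exp (Real.sqrt lam * x) * Real.exp (-(Real.sqrt lam * x)) = 1 := by
    rw [← Real.exp_add]; simp
  simp only [Nmat, Matrix.det_fin_two_of]
  linear_combination (-(2 * Real.sqrt lam)) * h

set_option maxHeartbeats 1600000

lemma Nmat_isUnit_det {lam : ℝ} (h : 0 < lam) (x : ℝ) : IsUnit (Nmat lam x).det := by
  rw [Nmat_det, isUnit_iff_ne_zero]
  have := Real.sqrt_pos.2 h
  intro hc; nlinarith

/-- the explicit form of `N(y)⁻¹ M(y) M(x)⁻¹ − N(y)⁻¹`,
with `z = √(λ+μ)(y−x)`. -/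
theorem statement8 (lam mu x y : ℝ) (hlam : 0 < lam) (hmu : 0 < mu)
    (z : ℝ) (hz : z = Real.sqrt (lam + mu) * (y - x)) :
    (Nmat lam y)⁻¹ * Nmat (lam + mu) y * (Nmat (lam + mu) x)⁻¹ - (Nmat lam y)⁻¹ =
      Real.sinh (z / 2) •
        !![Real.exp (-(Real.sqrt lam * y)) *
              (Real.sqrt ((lam + mu) / lam) * Real.cosh (z / 2) + Real.sinh (z / 2)),
            Real.exp (-(Real.sqrt lam * y)) / Real.sqrt lam *
              (Real.sqrt (lam / (lam + mu)) * Real.cosh (z / 2) + Real.sinh (z / 2));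
          Real.exp (Real.sqrt lam * y) *
              (-(Real.sqrt ((lam + mu) / lam) * Real.cosh (z / 2)) + Real.sinh (z / 2)),
            Real.exp (Real.sqrt lam * y) / Real.sqrt lam *
              (Real.sqrt (lam / (lam + mu)) * Real.cosh (z / 2) - Real.sinh (z / 2))] := by
  have hA := Nmat_isUnit_det hlam y
  have hC := Nmat_isUnit_det (by linarith : (0:ℝ) < lam + mu) x
  set a := Real.sqrt lam with ha
  set b := Real.sqrt (lam + mu) with hb
  have ha0 : 0 < a := Real.sqrt_pos.2 hlam
  have hb0 : 0 < b := Real.sqrt_pos.2 (by linarith)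
  set S : Matrix (Fin 2) (Fin 2) ℝ :=
    Real.sinh (z / 2) •
        !![Real.exp (-(a * y)) *
              (Real.sqrt ((lam + mu) / lam) * Real.cosh (z / 2) + Real.sinh (z / 2)),
            Real.exp (-(a * y)) / a *
              (Real.sqrt (lam / (lam + mu)) * Real.cosh (z / 2) + Real.sinh (z / 2));
          Real.exp (a * y) *
              (-(Real.sqrt ((lam + mu) / lam) * Real.cosh (z / 2)) + Real.sinh (z / 2)),
            Real.exp (a * y) / a *
              (Real.sqrt (lam / (lam + mu)) * Real.cosh (z / 2) - Real.sinh (z / 2))] with hS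
  have key : Nmat (lam + mu) y - Nmat (lam + mu) x = Nmat lam y * S * Nmat (lam + mu) x := by
    have hd1 : Real.sqrt ((lam + mu) / lam) = b / a := by
      rw [Real.sqrt_div (by linarith)]
    have hd2 : Real.sqrt (lam / (lam + mu)) = a / b := by
      rw [Real.sqrt_div hlam.le]
    set p := Real.exp (z / 2) with hp
    have hp0 : p ≠ 0 := (Real.exp_pos _).ne'
    have hu0 : Real.exp (a * y) ≠ 0 := (Real.exp_pos _).ne'
    have hw0 : Real.exp (b * x) ≠ 0 := (Real.exp_pos _).ne'
    have hsinh : Real.sinh (z / 2) = (p - p⁻¹) / 2 := by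
      rw [Real.sinh_eq, Real.exp_neg]
    have hcosh : Real.cosh (z / 2) = (p + p⁻¹) / 2 := by
      rw [Real.cosh_eq, Real.exp_neg]
    have hby : Real.exp (b * y) = p ^ 2 * Real.exp (b * x) := by
      have h1 : p ^ 2 = Real.exp z := by
        rw [sq, hp, ← Real.exp_add]; ring_nf
      rw [h1, hz, ← Real.exp_add]; ring_nf
    ext i j
    fin_cases i <;> fin_cases j <;>
      · simp only [hS, Nmat, Matrix.mul_apply, Fin.sum_univ_two, Matrix.smul_apply,
          Matrix.sub_apply, Matrix.cons_val', Matrix.cons_val_zero, Matrix.cons_val_one,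
          Matrix.head_cons, Matrix.head_fin_const, Matrix.empty_val',
          Matrix.cons_val_fin_one, Matrix.of_apply, smul_eq_mul, Fin.isValue, Fin.mk_zero, Fin.mk_one,
          hd1, hd2, ← ha, ← hb, Real.exp_neg, hby, hsinh, hcosh]
        field_simp
        ring
  calc (Nmat lam y)⁻¹ * Nmat (lam + mu) y * (Nmat (lam + mu) x)⁻¹ - (Nmat lam y)⁻¹
      = (Nmat lam y)⁻¹ * (Nmat (lam + mu) y - Nmat (lam + mu) x) * (Nmat (lam + mu) x)⁻¹ := by
        rw [Matrix.mul_sub, Matrix.sub_mul, Matrix.mul_nonsing_inv_cancel_right _ _ hC]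
    _ = (Nmat lam y)⁻¹ * (Nmat lam y * S * Nmat (lam + mu) x) * (Nmat (lam + mu) x)⁻¹ := by
        rw [key]
    _ = S := by
        rw [← Matrix.mul_assoc, ← Matrix.mul_assoc, Matrix.nonsing_inv_mul _ hA,
          Matrix.one_mul, Matrix.mul_nonsing_inv_cancel_right _ _ hC]
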